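/- As an identity of formal power series in z, Σ_{n∈ℤ} (−1)^n z^{n²} = Π_{k=1}^∞ (1−z^{2k−1})(1−z^k). Here Σ_{n∈ℤ} (−1)^n z^{n²} = 1 + 2Σ_{n≥1} (−1)^n z^{n²}. -/

import Mathlib

open Polynomial Finset

/-- Gaussian binomial `[m choose j]_q` as a polynomial in `ℤ[X]`, with integer index
(zero for `j` out of range). -/
noncomputable def gb : ℕ → ℤ → Polynomial ℤ
  | 0, j => if j = 0 then 1 else 0
  | (m+1), j => gb m j + X ^ ((m + 1 - j).toNat) * gb m (j - 1)

lemma gb_neg : ∀ (m : ℕ) (j : ℤ), j < 0 → gb m j = 0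
  | 0, j, h => by simp [gb, h.ne]
  | (m+1), j, h => by
      rw [gb, gb_neg m j h, gb_neg m (j-1) (by omega)]; ring

lemma gb_zero (m : ℕ) : gb m 0 = 1 := by
  induction m with
  | zero => simp [gb]
  | succ m ih => rw [gb, ih, show (0:ℤ) - 1 = -1 by ring, gb_neg m (-1) (by norm_num)]; ring

lemma gb_gt : ∀ (m : ℕ) (j : ℤ), (m : ℤ) < j → gb m j = 0
  | 0, j, h => by simp only [gb, if_neg (by omega : ¬ j = 0)]
  | (m+1), j, h => by
      rw [gb, gb_gt m j (by omega), gb_gt m (j-1) (by omega)]; ring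

lemma gb_self (m : ℕ) : gb m m = 1 := by
  induction m with
  | zero => simp [gb]
  | succ m ih =>
      rw [gb, gb_gt m (m+1 : ℕ) (by omega)]
      push_cast
      rw [show ((m:ℤ) + 1 - ((m:ℤ)+1)).toNat = 0 by omega,
        show (m:ℤ) + 1 - 1 = m by ring, ih]
      ring

/-- `D m = ∏_{k=1}^m (1 - q^k)`. -/
noncomputable def Dm (m : ℕ) : Polynomial ℤ := ∏ k ∈ range m, (1 - X ^ (k+1))

lemma Dm_zero : Dm 0 = 1 := by simp [Dm]

lemma Dm_succ (m : ℕ) : Dm (m+1) = Dm m * (1 - X ^ (m+1)) := by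
  rw [Dm, prod_range_succ]; rfl

lemma one_sub_X_pow_ne_zero (a : ℕ) : (1 - X ^ (a+1) : Polynomial ℤ) ≠ 0 := by
  intro h
  have := congrArg (fun p => Polynomial.coeff p 0) h
  simp [coeff_X_pow] at this

lemma Dm_ne_zero (m : ℕ) : Dm m ≠ 0 := by
  induction m with
  | zero => simp [Dm_zero]
  | succ m ih => rw [Dm_succ]; exact mul_ne_zero ih (one_sub_X_pow_ne_zero m)

lemma gb_prod : ∀ (m : ℕ) (j : ℕ), j ≤ m → gb m j * Dm j * Dm (m - j) = Dm m := by
  intro m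
  induction m with
  | zero => intro j hj; interval_cases j; simp [gb_zero, Dm_zero]
  | succ m ih =>
      intro j hj
      obtain rfl | ⟨i, rfl⟩ : j = 0 ∨ ∃ i, j = i + 1 := by
        rcases j with _ | i
        · exact Or.inl rfl
        · exact Or.inr ⟨i, rfl⟩
      · simp [gb_zero, Dm_zero]
      rw [gb]
      rcases eq_or_lt_of_le hj with h | h
      · -- j = m+1
        have hi : i = m := by omega
        subst hi
        rw [gb_gt i ((i:ℕ)+1 : ℕ) (by push_cast; omega)]
        push_cast
        rw [show ((i:ℤ) + 1 - ((i:ℤ)+1)).toNat = 0 by omega,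
          show (i:ℤ) + 1 - 1 = i by ring, gb_self]
        simp [Dm_zero]
      · -- i+1 ≤ m
        have him : i + 1 ≤ m := by omega
        have e1 : ((m:ℤ) + 1 - ((i:ℕ)+1 : ℕ)).toNat = m - i := by push_cast; omega
        rw [e1, show (((i:ℕ)+1 : ℕ) : ℤ) - 1 = (i:ℤ) by push_cast; ring]
        have key1 := ih (i+1) him
        have key2 := ih i (by omega)
        have hd1 : Dm (m - (i+1)) * (1 - X ^ (m - i)) = Dm (m - i) := by
          rw [show m - i = (m - (i+1)) + 1 by omega, Dm_succ,
            show m - (i+1) + 1 = m - i by omega]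
        have hd2 : Dm i * (1 - X ^ (i+1)) = Dm (i+1) := by rw [Dm_succ]
        have hx : (X : Polynomial ℤ) ^ (m-i) * X ^ (i+1) = X ^ (m+1) := by
          rw [← pow_add]; congr 1; omega
        have expand : (gb m ((i:ℕ)+1 : ℕ) + X ^ (m - i) * gb m i) * Dm (i+1) * Dm (m + 1 - (i+1))
            = gb m (i+1 : ℕ) * Dm (i+1) * Dm (m - (i+1)) * (1 - X ^ (m-i))
              + X ^ (m-i) * (gb m i * Dm i * Dm (m - i)) * (1 - X ^ (i+1)) := by
          rw [show m + 1 - (i+1) = m - i by omega, ← hd1, ← hd2]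
          push_cast
          ring
        rw [expand, key1, key2, Dm_succ]
        rw [← hx]; ring

/-- Absorption identity `(q^j - 1)[m,j] = (q^{m+1-j} - 1)[m,j-1]`. -/
lemma gb_absorb (m : ℕ) (j : ℕ) (hj : j ≤ m + 1) :
    (X ^ j - 1) * gb m j = (X ^ (m + 1 - j) - 1) * gb m ((j : ℤ) - 1) := by
  rcases Nat.eq_zero_or_pos j with rfl | hj0
  · have : ((0:ℕ) : ℤ) - 1 = -1 := by norm_num
    rw [this, gb_neg m (-1) (by norm_num)]
    norm_num
  rcases eq_or_lt_of_le hj with rfl | hjm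
  · -- j = m + 1
    rw [gb_gt m (m+1 : ℕ) (by push_cast; omega)]
    rw [show m + 1 - (m+1) = 0 by omega]
    simp
  · -- 1 ≤ j ≤ m
    have hjm' : j ≤ m := by omega
    obtain ⟨i, rfl⟩ : ∃ i, j = i + 1 := ⟨j - 1, by omega⟩
    have key1 := gb_prod m (i+1) hjm'
    have key2 := gb_prod m i (by omega)
    have hD1 : Dm (i+1) = Dm i * (1 - X ^ (i+1)) := Dm_succ i
    have hD2 : Dm (m - i) = Dm (m - (i+1)) * (1 - X ^ (m - i)) := by
      rw [show m - i = (m - (i+1)) + 1 by omega, Dm_succ,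
        show m - (i+1) + 1 = m - i by omega]
    rw [hD1] at key1
    rw [hD2] at key2
    have hcan : (gb m ((i:ℕ)+1 : ℕ) * (1 - X ^ (i+1)) - gb m i * (1 - X ^ (m - i)))
        * (Dm i * Dm (m - (i+1))) = 0 := by
      linear_combination key1 - key2
    have hne : (Dm i * Dm (m - (i+1)) : Polynomial ℤ) ≠ 0 :=
      mul_ne_zero (Dm_ne_zero _) (Dm_ne_zero _)
    have heq : gb m ((i:ℕ)+1 : ℕ) * (1 - X ^ (i+1)) = gb m i * (1 - X ^ (m - i)) := by
      rcases mul_eq_zero.mp hcan with h | h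
      · linear_combination h
      · exact absurd h hne
    have hc : ((i + 1 : ℕ) : ℤ) - 1 = (i : ℤ) := by push_cast; ring
    rw [show m + 1 - (i+1) = m - i by omega, hc]
    linear_combination -heq

/-- Double-step Pascal identity (K). -/
lemma gb_K (m : ℕ) (s : ℕ) (hs : s ≤ m + 2) :
    gb (m+2) s = X ^ s * gb m s + (1 + X ^ (m+1)) * gb m ((s:ℤ) - 1)
      + X ^ (m + 2 - s) * gb m ((s:ℤ) - 2) := by
  rcases Nat.eq_zero_or_pos s with rfl | hs0
  · simp only [Nat.cast_zero, zero_sub, gb_zero, gb_neg m (-1) (by norm_num : (-1:ℤ) < 0)]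
    rw [gb_neg m (-2) (by norm_num)]
    simp [gb_zero]
  rcases eq_or_lt_of_le hs with rfl | hlt
  · -- s = m+2
    have h1 : ((m + 2 : ℕ) : ℤ) - 1 = ((m+1 : ℕ) : ℤ) := by push_cast; ring
    have h2 : ((m + 2 : ℕ) : ℤ) - 2 = ((m : ℕ) : ℤ) := by push_cast; ring
    rw [h1, h2, gb_self (m+2), gb_gt m (m+2:ℕ) (by push_cast; omega),
      gb_gt m (m+1:ℕ) (by push_cast; omega), gb_self m,
      show m + 2 - (m + 2) = 0 by omega]
    simp
  · -- 1 ≤ s ≤ m+1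
    obtain ⟨t, rfl⟩ : ∃ t, s = t + 1 := ⟨s - 1, by omega⟩
    obtain ⟨u, rfl⟩ : ∃ u, m = t + u := ⟨m - t, by omega⟩
    have hc1 : ((t + 1 : ℕ) : ℤ) - 1 = ((t:ℕ) : ℤ) := by push_cast; ring
    have hc2 : ((t + 1 : ℕ) : ℤ) - 2 = ((t:ℕ) : ℤ) - 1 := by push_cast; ring
    rw [hc1, hc2, show t + u + 2 - (t + 1) = u + 1 by omega]
    have pasA : gb (t+u+2) ((t+1 : ℕ) : ℤ) =
        gb (t+u+1) ((t+1 : ℕ) : ℤ) + X ^ (u+1) * gb (t+u+1) ((t:ℕ) : ℤ) := by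
      rw [show t+u+2 = (t+u+1)+1 from rfl, gb, hc1,
        show ((((t+u+1):ℕ):ℤ) + 1 - (((t+1):ℕ):ℤ)).toNat = u + 1 by omega]
    have pasB : gb (t+u+1) ((t+1 : ℕ) : ℤ) =
        gb (t+u) ((t+1 : ℕ) : ℤ) + X ^ u * gb (t+u) ((t:ℕ) : ℤ) := by
      rw [show t+u+1 = (t+u)+1 from rfl, gb, hc1,
        show ((((t+u):ℕ):ℤ) + 1 - (((t+1):ℕ):ℤ)).toNat = u by omega]
    have pasC : gb (t+u+1) ((t : ℕ) : ℤ) =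
        gb (t+u) ((t : ℕ) : ℤ) + X ^ (u+1) * gb (t+u) (((t:ℕ) : ℤ) - 1) := by
      rw [show t+u+1 = (t+u)+1 from rfl, gb,
        show ((((t+u):ℕ):ℤ) + 1 - ((t:ℕ):ℤ)).toNat = u + 1 by omega]
    have h1 := gb_absorb (t+u) (t+1) (by omega)
    rw [hc1, show t + u + 1 - (t+1) = u by omega] at h1
    have h2 := gb_absorb (t+u) t (by omega)
    rw [show t + u + 1 - t = u + 1 by omega] at h2
    rw [pasA, pasB, pasC]
    push_cast at h1 h2 ⊢
    linear_combination -h1 - X ^ (u+1) * h2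

/-! ### `q ↦ q²` versions -/

/-- The substitution `q ↦ q²`. -/
noncomputable def qsq : Polynomial ℤ →ₐ[ℤ] Polynomial ℤ := Polynomial.aeval (X ^ 2)

lemma qsq_X_pow (a : ℕ) : qsq (X ^ a) = X ^ (2 * a) := by
  simp [qsq, ← pow_mul, mul_comm]

/-- Gaussian binomial in `q²`. -/
noncomputable def g2 (m : ℕ) (j : ℤ) : Polynomial ℤ := qsq (gb m j)

lemma g2_neg (m : ℕ) (j : ℤ) (h : j < 0) : g2 m j = 0 := by
  rw [g2, gb_neg m j h, map_zero]

lemma g2_gt (m : ℕ) (j : ℤ) (h : (m:ℤ) < j) : g2 m j = 0 := by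
  rw [g2, gb_gt m j h, map_zero]

lemma g2_zero (m : ℕ) : g2 m 0 = 1 := by rw [g2, gb_zero, map_one]

lemma g2_K (m : ℕ) (s : ℕ) (hs : s ≤ m + 2) :
    g2 (m+2) s = X ^ (2*s) * g2 m s + (1 + X ^ (2*m+2)) * g2 m ((s:ℤ) - 1)
      + X ^ (2*(m + 2 - s)) * g2 m ((s:ℤ) - 2) := by
  have := congrArg qsq (gb_K m s hs)
  rw [map_add, map_add, map_mul, map_mul, map_mul, map_add, map_one,
    qsq_X_pow, qsq_X_pow, qsq_X_pow] at this
  rw [g2, this, g2, g2, g2]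
  ring_nf

/-- `Dq2 m = ∏_{k=1}^m (1 - q^{2k})`. -/
noncomputable def Dq2 (m : ℕ) : Polynomial ℤ := ∏ k ∈ Finset.Ioc 0 m, (1 - X ^ (2*k))

lemma Ioc_prod_eq_range {M : Type*} [CommMonoid M] (m : ℕ) (f : ℕ → M) :
    ∏ k ∈ Finset.Ioc 0 m, f k = ∏ k ∈ range m, f (k+1) := by
  induction m with
  | zero => simp
  | succ m ih => rw [Finset.prod_Ioc_succ_top (by omega), ih, prod_range_succ]

lemma qsq_Dm (m : ℕ) : qsq (Dm m) = Dq2 m := by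
  rw [Dm, Dq2, map_prod, Ioc_prod_eq_range]
  refine Finset.prod_congr rfl fun k _ => ?_
  rw [map_sub, map_one, qsq_X_pow]

lemma Dq2_ne_zero (m : ℕ) : Dq2 m ≠ 0 := by
  rw [Dq2]
  refine Finset.prod_ne_zero_iff.mpr fun k hk => ?_
  have hk1 : 1 ≤ k := (Finset.mem_Ioc.mp hk).1
  rw [show 2 * k = (2*k - 1) + 1 by omega]
  exact one_sub_X_pow_ne_zero _

lemma g2_prod (m j : ℕ) (h : j ≤ m) : g2 m j * Dq2 j * Dq2 (m - j) = Dq2 m := by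
  have := congrArg qsq (gb_prod m j h)
  rwa [map_mul, map_mul, qsq_Dm, qsq_Dm, qsq_Dm, ← g2] at this

/-- Trailing-product expression for `g2 m s * Dq2 m`. -/
lemma g2_trail (m s : ℕ) (h : s ≤ m) :
    g2 m s * Dq2 m =
      (∏ k ∈ Finset.Ioc s m, (1 - X ^ (2*k))) * ∏ k ∈ Finset.Ioc (m - s) m, (1 - X ^ (2*k)) := by
  have hsplit : Dq2 s * ∏ k ∈ Finset.Ioc s m, (1 - X ^ (2*k)) = Dq2 m := by
    rw [Dq2, Dq2]; exact Finset.prod_Ioc_consecutive _ (by omega) h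
  have hsplit2 : Dq2 (m - s) * ∏ k ∈ Finset.Ioc (m - s) m, (1 - X ^ (2*k)) = Dq2 m := by
    rw [Dq2, Dq2]; exact Finset.prod_Ioc_consecutive _ (by omega) (by omega)
  have hkey := g2_prod m s h
  have hcancel : g2 m s * Dq2 (m - s) = ∏ k ∈ Finset.Ioc s m, (1 - X ^ (2*k)) := by
    have := mul_left_cancel₀ (Dq2_ne_zero s) (by
      rw [hsplit]
      rw [← hkey]
      ring : Dq2 s * ∏ k ∈ Finset.Ioc s m, (1 - X ^ (2*k))
        = Dq2 s * (g2 m s * Dq2 (m - s)))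
    exact this.symm
  calc g2 m s * Dq2 m = (g2 m s * Dq2 (m - s)) * ∏ k ∈ Finset.Ioc (m - s) m, (1 - X ^ (2*k)) := by
        rw [← hsplit2]; ring
    _ = _ := by rw [hcancel]

/-! ### The centered summand and the finite Jacobi-type identity -/

/-- exponent `(j - N)²`. -/
def ee (N : ℕ) (j : ℤ) : ℕ := ((j - N).natAbs) ^ 2

/-- `bb N j = q^{(j-N)²} [2N, j]_{q²}`. -/
noncomputable def bb (N : ℕ) (j : ℤ) : Polynomial ℤ := X ^ (ee N j) * g2 (2*N) j

lemma bb_neg (N : ℕ) (j : ℤ) (h : j < 0) : bb N j = 0 := by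
  rw [bb, g2_neg _ _ h, mul_zero]

lemma bb_gt (N : ℕ) (j : ℤ) (h : (2*N : ℤ) < j) : bb N j = 0 := by
  rw [bb, g2_gt _ _ (by exact_mod_cast h), mul_zero]

lemma bb_rec (N : ℕ) (s : ℕ) (hs : s ≤ 2*N + 2) :
    bb (N+1) s = X ^ (2*N+1) * bb N s + (1 + X ^ (4*N+2)) * bb N ((s:ℤ) - 1)
      + X ^ (2*N+1) * bb N ((s:ℤ) - 2) := by
  have he1 : ee (N+1) s + 2*s = 2*N+1 + ee N s := by
    apply @Nat.cast_injective ℤ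
    unfold ee
    push_cast [sq_abs]
    ring
  have he2 : ee (N+1) s = ee N ((s:ℤ) - 1) := by
    apply @Nat.cast_injective ℤ
    unfold ee
    push_cast [sq_abs]
    ring
  have he3 : ee (N+1) s + 2*(2*N + 2 - s) = 2*N+1 + ee N ((s:ℤ) - 2) := by
    apply @Nat.cast_injective ℤ
    unfold ee
    push_cast [sq_abs, (by omega : (((2*N + 2 - s : ℕ)) : ℤ) = 2*(N:ℤ) + 2 - s)]
    ring
  have hK := g2_K (2*N) s hs
  rw [bb, show 2*(N+1) = 2*N+2 by ring, hK]
  rw [bb, bb, bb]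
  rw [mul_add, mul_add]
  congr 1
  · congr 1
    · rw [show X ^ ee (N+1) (s:ℤ) * (X ^ (2*s) * g2 (2*N) s)
          = X ^ (ee (N+1) (s:ℤ) + 2*s) * g2 (2*N) s by rw [pow_add]; ring, he1,
        pow_add]
      ring
    · rw [show X ^ ee (N+1) (s:ℤ) * ((1 + X ^ (2*(2*N)+2)) * g2 (2*N) ((s:ℤ)-1))
          = (1 + X ^ (4*N+2)) * (X ^ (ee (N+1) (s:ℤ)) * g2 (2*N) ((s:ℤ)-1)) by ring_nf,
        he2]
  · rw [show X ^ ee (N+1) (s:ℤ) * (X ^ (2*(2*N + 2 - s)) * g2 (2*N) ((s:ℤ)-2))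
        = X ^ (ee (N+1) (s:ℤ) + 2*(2*N+2-s)) * g2 (2*N) ((s:ℤ)-2) by rw [pow_add]; ring, he3,
      pow_add]
    ring

/-- The finite homogeneous Jacobi-type identity:
`∏_{k=0}^{N-1} (Y + q^{2k+1})(1 + q^{2k+1} Y) = ∑_{s=0}^{2N} q^{(s-N)²} [2N,s]_{q²} Y^s`. -/
lemma Hprod (N : ℕ) :
    ∏ k ∈ range N,
        ((Polynomial.X + Polynomial.C ((X : Polynomial ℤ) ^ (2*k+1)))
          * (1 + Polynomial.C ((X : Polynomial ℤ) ^ (2*k+1)) * Polynomial.X))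
      = ∑ s ∈ range (2*N+1), Polynomial.C (bb N (s:ℤ)) * Polynomial.X ^ s := by
  induction N with
  | zero =>
      simp [bb, ee, g2_zero]
  | succ N ih =>
      have hterm : ∀ s ∈ range (2*N+3),
          Polynomial.C (bb (N+1) (s:ℤ)) * Polynomial.X ^ s
            = Polynomial.C ((X:Polynomial ℤ) ^ (2*N+1) * bb N (s:ℤ)) * Polynomial.X ^ s
              + Polynomial.C ((1 + (X:Polynomial ℤ) ^ (4*N+2)) * bb N ((s:ℤ)-1)) * Polynomial.X ^ s
              + Polynomial.C ((X:Polynomial ℤ) ^ (2*N+1) * bb N ((s:ℤ)-2)) * Polynomial.X ^ s := by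
        intro s hs
        rw [bb_rec N s (by simp at hs; omega)]
        simp only [map_add]
        ring
      have hsplit : (∑ s ∈ range (2*(N+1)+1), Polynomial.C (bb (N+1) (s:ℤ)) * Polynomial.X ^ s)
          = (∑ s ∈ range (2*N+3), Polynomial.C ((X:Polynomial ℤ)^(2*N+1) * bb N (s:ℤ)) * Polynomial.X ^ s)
            + (∑ s ∈ range (2*N+3), Polynomial.C ((1 + (X:Polynomial ℤ)^(4*N+2)) * bb N ((s:ℤ)-1)) * Polynomial.X ^ s)
            + (∑ s ∈ range (2*N+3), Polynomial.C ((X:Polynomial ℤ)^(2*N+1) * bb N ((s:ℤ)-2)) * Polynomial.X ^ s) := by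
        rw [show 2*(N+1)+1 = 2*N+3 by ring, ← Finset.sum_add_distrib, ← Finset.sum_add_distrib]
        exact Finset.sum_congr rfl hterm
      -- trim the three sums
      have t1 : (∑ s ∈ range (2*N+3), Polynomial.C ((X:Polynomial ℤ)^(2*N+1) * bb N (s:ℤ)) * Polynomial.X ^ s)
          = ∑ s ∈ range (2*N+1), Polynomial.C ((X:Polynomial ℤ)^(2*N+1) * bb N (s:ℤ)) * Polynomial.X ^ s := by
        rw [show 2*N+3 = (2*N+2)+1 by ring, Finset.sum_range_succ,
          show 2*N+2 = (2*N+1)+1 by ring, Finset.sum_range_succ,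
          bb_gt N (((2*N+1 : ℕ)):ℤ) (by push_cast; omega),
          bb_gt N (((2*N+2 : ℕ)):ℤ) (by push_cast; omega)]
        simp
      have t2 : (∑ s ∈ range (2*N+3), Polynomial.C ((1 + (X:Polynomial ℤ)^(4*N+2)) * bb N ((s:ℤ)-1)) * Polynomial.X ^ s)
          = ∑ s ∈ range (2*N+1), Polynomial.C ((1 + (X:Polynomial ℤ)^(4*N+2)) * bb N (s:ℤ)) * Polynomial.X ^ (s+1) := by
        rw [show 2*N+3 = (2*N+2)+1 by ring, Finset.sum_range_succ',
          bb_neg N ((((0:ℕ)):ℤ) - 1) (by norm_num)]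
        rw [show 2*N+2 = (2*N+1)+1 by ring, Finset.sum_range_succ,
          bb_gt N ((((2*N+1+1 : ℕ)):ℤ) - 1) (by push_cast; omega)]
        simp only [mul_zero, map_zero, zero_mul, add_zero]
        refine Finset.sum_congr rfl fun s _ => ?_
        rw [show (((s+1 : ℕ)):ℤ) - 1 = (s:ℤ) by push_cast; ring]
      have t3 : (∑ s ∈ range (2*N+3), Polynomial.C ((X:Polynomial ℤ)^(2*N+1) * bb N ((s:ℤ)-2)) * Polynomial.X ^ s)
          = ∑ s ∈ range (2*N+1), Polynomial.C ((X:Polynomial ℤ)^(2*N+1) * bb N (s:ℤ)) * Polynomial.X ^ (s+2) := by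
        rw [show 2*N+3 = (2*N+2)+1 by ring, Finset.sum_range_succ',
          bb_neg N ((((0:ℕ)):ℤ) - 2) (by norm_num)]
        rw [show 2*N+2 = (2*N+1)+1 by ring, Finset.sum_range_succ',
          bb_neg N ((((0+1:ℕ)):ℤ) - 2) (by norm_num)]
        simp only [mul_zero, map_zero, zero_mul, add_zero]
        refine Finset.sum_congr rfl fun s _ => ?_
        rw [show (((s+1+1 : ℕ)):ℤ) - 2 = (s:ℤ) by push_cast; ring]
      rw [prod_range_succ, ih, hsplit, t1, t2, t3, ← Finset.sum_add_distrib, ← Finset.sum_add_distrib,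
        Finset.sum_mul]
      refine Finset.sum_congr rfl fun s _ => ?_
      simp only [map_mul, map_add, map_one, map_pow]
      ring

/-- Gauss's finite identity: `(∏_{k<N} (1-q^{2k+1}))² = ∑_{s=0}^{2N} (-1)^{N+s} q^{(s-N)²} [2N,s]_{q²}`. -/
lemma Gid (N : ℕ) :
    (∏ k ∈ range N, (1 - (X : Polynomial ℤ) ^ (2*k+1)))^2
      = ∑ s ∈ range (2*N+1), Polynomial.C ((-1 : ℤ)^(N+s)) * bb N (s:ℤ) := by
  have h := congrArg (Polynomial.eval (-1 : Polynomial ℤ)) (Hprod N)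
  rw [Polynomial.eval_prod, Polynomial.eval_finset_sum] at h
  simp only [Polynomial.eval_mul, Polynomial.eval_add, Polynomial.eval_one, Polynomial.eval_X,
    Polynomial.eval_C, Polynomial.eval_pow] at h
  have hfac : ∀ k ∈ range N, ((-1 : Polynomial ℤ) + X ^ (2*k+1)) * (1 + X ^ (2*k+1) * (-1))
      = (-1) * (1 - X ^ (2*k+1))^2 := fun k _ => by ring
  rw [Finset.prod_congr rfl hfac, Finset.prod_mul_distrib, Finset.prod_const,
    Finset.prod_pow, Finset.card_range] at h
  have hNN : ((-1 : Polynomial ℤ))^N * (-1)^N = 1 := by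
    rw [← pow_add]; exact Even.neg_one_pow ⟨N, rfl⟩
  calc (∏ k ∈ range N, (1 - (X : Polynomial ℤ) ^ (2*k+1)))^2
      = (-1)^N * ((-1)^N * (∏ k ∈ range N, (1 - (X : Polynomial ℤ) ^ (2*k+1)))^2) := by
        rw [← mul_assoc, hNN, one_mul]
    _ = (-1)^N * ∑ s ∈ range (2*N+1), bb N (s:ℤ) * (-1)^s := by rw [h]
    _ = _ := by
        rw [Finset.mul_sum]
        refine Finset.sum_congr rfl fun s _ => ?_
        have : Polynomial.C ((-1 : ℤ)^(N+s)) = ((-1 : Polynomial ℤ))^(N+s) := by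
          simp
        rw [this, pow_add]
        ring

/-! ### Truncation machinery -/

lemma coeff_eq_of_dvd (n : ℕ) (f g : Polynomial ℤ) (h : X^(n+1) ∣ f - g) :
    f.coeff n = g.coeff n := by
  obtain ⟨c, hc⟩ := h
  have : f = g + c * X^(n+1) := by linear_combination hc
  rw [this, Polynomial.coeff_add, Polynomial.coeff_mul_X_pow']
  simp

lemma dvd_prod_sub_one {ι : Type*} (s : Finset ι) (f : ι → Polynomial ℤ) (d : Polynomial ℤ)
    (h : ∀ i ∈ s, d ∣ f i - 1) : d ∣ (∏ i ∈ s, f i) - 1 := by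
  classical
  induction s using Finset.cons_induction with
  | empty => simp
  | cons a s hx ih =>
      rw [Finset.prod_cons]
      have h1 : d ∣ f a - 1 := h a (Finset.mem_cons_self a s)
      have h2 : d ∣ (∏ i ∈ s, f i) - 1 := ih fun i hi => h i (Finset.mem_cons_of_mem hi)
      have : f a * (∏ i ∈ s, f i) - 1
          = f a * ((∏ i ∈ s, f i) - 1) + (f a - 1) := by ring
      rw [this]
      exact dvd_add (Dvd.dvd.mul_left h2 _) h1

lemma dvdMulSubMul (d a b c e : Polynomial ℤ) (h1 : d ∣ a - b) (h2 : d ∣ c - e) :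
    d ∣ a * c - b * e := by
  have : a * c - b * e = c * (a - b) + b * (c - e) := by ring
  rw [this]
  exact dvd_add (Dvd.dvd.mul_left h1 _) (Dvd.dvd.mul_left h2 _)

/-- Truncating a product of `1 - X^{a i}` to the factors with `a i ≤ n`. -/
lemma prod_trunc {ι : Type*} [DecidableEq ι] (s : Finset ι) (a : ι → ℕ) (n : ℕ) :
    (X^(n+1) : Polynomial ℤ) ∣
      (∏ i ∈ s, (1 - X ^ (a i))) - ∏ i ∈ s.filter (fun i => a i ≤ n), (1 - X ^ (a i)) := by
  rw [← Finset.prod_filter_mul_prod_filter_not s (fun i => a i ≤ n)]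
  have hdvd : (X^(n+1) : Polynomial ℤ) ∣
      (∏ i ∈ s.filter (fun i => ¬ a i ≤ n), (1 - X ^ (a i))) - 1 := by
    refine dvd_prod_sub_one _ _ _ fun i hi => ?_
    have hai : n + 1 ≤ a i := by
      have := (Finset.mem_filter.mp hi).2
      omega
    have : (1 : Polynomial ℤ) - X ^ (a i) - 1 = -(X ^ (a i)) := by ring
    rw [this]
    exact (pow_dvd_pow X hai).neg_right
  obtain ⟨c, hc⟩ := hdvd
  refine ⟨(∏ i ∈ s.filter (fun i => a i ≤ n), (1 - X ^ (a i))) * c, ?_⟩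
  linear_combination (∏ i ∈ s.filter (fun i => a i ≤ n), (1 - X ^ (a i))) * hc

lemma ee_min (N s : ℕ) (hs : s ≤ 2*N) :
    2*N + 1 ≤ ee N s + (2 * min s (2*N - s) + 2) := by
  have sqge : ∀ d : ℕ, 2*d ≤ d^2 + 1 := by
    intro d
    rcases Nat.eq_zero_or_pos d with rfl | hd
    · simp
    obtain ⟨e, rfl⟩ : ∃ e, d = e + 1 := ⟨d - 1, by omega⟩
    have : (e+1)^2 = e*e + 2*e + 1 := by ring
    rw [this]
    have : 0 ≤ e * e := Nat.zero_le _
    omega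
  rcases le_or_gt s N with h | h
  · have h1 : ee N s = (N - s)^2 := by
      unfold ee; congr 1; omega
    have h2 : min s (2*N - s) = s := by omega
    rw [h1, h2]
    have := sqge (N - s)
    have hexp : (N - s)^2 = (N-s)*(N-s) := by ring
    rw [hexp] at this ⊢
    omega
  · have h1 : ee N s = (s - N)^2 := by
      unfold ee; congr 1; omega
    have h2 : min s (2*N - s) = 2*N - s := by omega
    rw [h1, h2]
    have := sqge (s - N)
    have hexp : (s - N)^2 = (s-N)*(s-N) := by ring
    rw [hexp] at this ⊢
    omega

lemma bb_mul_trunc (N n s : ℕ) (hn : n ≤ N) (hs : s ≤ 2*N) :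
    (X^(n+1) : Polynomial ℤ) ∣ bb N s * Dq2 (2*N) - X ^ (ee N s) := by
  set c := 2 * min s (2*N - s) + 2 with hc
  have htrail := g2_trail (2*N) s hs
  have hP1 : (X^c : Polynomial ℤ) ∣ (∏ k ∈ Finset.Ioc s (2*N), (1 - X ^ (2*k))) - 1 := by
    refine dvd_prod_sub_one _ _ _ fun k hk => ?_
    have hk1 := (Finset.mem_Ioc.mp hk).1
    have : (1 : Polynomial ℤ) - X ^ (2*k) - 1 = -(X ^ (2*k)) := by ring
    rw [this]
    exact (pow_dvd_pow X (by omega)).neg_right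
  have hP2 : (X^c : Polynomial ℤ) ∣ (∏ k ∈ Finset.Ioc (2*N - s) (2*N), (1 - X ^ (2*k))) - 1 := by
    refine dvd_prod_sub_one _ _ _ fun k hk => ?_
    have hk1 := (Finset.mem_Ioc.mp hk).1
    have : (1 : Polynomial ℤ) - X ^ (2*k) - 1 = -(X ^ (2*k)) := by ring
    rw [this]
    exact (pow_dvd_pow X (by omega)).neg_right
  have hA : (X^c : Polynomial ℤ) ∣ g2 (2*N) s * Dq2 (2*N) - 1 := by
    rw [htrail]
    have := dvdMulSubMul (X^c) _ 1 _ 1 hP1 hP2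
    simpa using this
  have hdvd2 : (X^(ee N s + c) : Polynomial ℤ) ∣ X ^ (ee N s) * (g2 (2*N) s * Dq2 (2*N) - 1) := by
    rw [pow_add]
    exact mul_dvd_mul_left _ hA
  have hle : n + 1 ≤ ee N s + c := le_trans (by omega) (ee_min N s hs)
  have : bb N s * Dq2 (2*N) - X ^ (ee N s) = X ^ (ee N s) * (g2 (2*N) s * Dq2 (2*N) - 1) := by
    rw [bb]; ring
  rw [this]
  exact dvd_trans (pow_dvd_pow X hle) hdvd2

lemma Fcoeff (N n : ℕ) (hn : n ≤ N) :
    ((∏ k ∈ range N, (1 - (X:Polynomial ℤ)^(2*k+1)))^2 * Dq2 (2*N)).coeff n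
      = ∑ s ∈ range (2*N+1), (-1:ℤ)^(N+s) * (if n = ee N s then 1 else 0) := by
  rw [Gid, Finset.sum_mul]
  have hdvd : (X^(n+1) : Polynomial ℤ) ∣
      (∑ s ∈ range (2*N+1), Polynomial.C ((-1:ℤ)^(N+s)) * bb N (s:ℤ) * Dq2 (2*N))
        - ∑ s ∈ range (2*N+1), Polynomial.C ((-1:ℤ)^(N+s)) * X ^ (ee N (s:ℤ)) := by
    rw [← Finset.sum_sub_distrib]
    refine Finset.dvd_sum fun s hs => ?_
    have hs2N : s ≤ 2*N := by
      have := Finset.mem_range.mp hs; omega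
    have := bb_mul_trunc N n s hn hs2N
    have heq : Polynomial.C ((-1:ℤ)^(N+s)) * bb N (s:ℤ) * Dq2 (2*N)
        - Polynomial.C ((-1:ℤ)^(N+s)) * X ^ (ee N (s:ℤ))
        = Polynomial.C ((-1:ℤ)^(N+s)) * (bb N (s:ℤ) * Dq2 (2*N) - X ^ (ee N (s:ℤ))) := by ring
    rw [heq]
    exact Dvd.dvd.mul_left this _
  rw [coeff_eq_of_dvd n _ _ hdvd, Polynomial.finset_sum_coeff]
  refine Finset.sum_congr rfl fun s _ => ?_
  rw [Polynomial.coeff_C_mul, Polynomial.coeff_X_pow]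

lemma neg_one_pow_mod (m j : ℕ) (h : m % 2 = j % 2) : (-1 : ℤ)^m = (-1)^j := by
  rcases Nat.even_or_odd j with hj | hj
  · rw [Even.neg_one_pow hj, Even.neg_one_pow]
    rw [Nat.even_iff] at hj ⊢
    omega
  · rw [Odd.neg_one_pow hj, Odd.neg_one_pow]
    rw [Nat.odd_iff] at hj ⊢
    omega

lemma sum_theta (N n : ℕ) (hn : n ≤ N) :
    ∑ s ∈ range (2*N+1), (-1:ℤ)^(N+s) * (if n = ee N s then 1 else 0)
      = if n = 0 then 1 else if Nat.sqrt n ^ 2 = n then 2 * (-1:ℤ)^(Nat.sqrt n) else 0 := by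
  by_cases h0 : n = 0
  · subst h0
    rw [if_pos rfl]
    rw [Finset.sum_eq_single N]
    · have he : ee N N = 0 := by unfold ee; simp
      rw [he, if_pos rfl, mul_one]
      exact Even.neg_one_pow ⟨N, rfl⟩
    · intro s _ hsne
      have : ee N s ≠ 0 := by
        unfold ee
        intro hcon
        have : ((s:ℤ) - N).natAbs = 0 := by
          by_contra hne
          have := Nat.one_le_iff_ne_zero.mpr hne
          nlinarith [hcon]
        omega
      rw [if_neg (by omega), mul_zero]
    · intro hN
      exact absurd (Finset.mem_range.mpr (by omega)) hN
  · rw [if_neg h0]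
    by_cases hsq : Nat.sqrt n ^ 2 = n
    · rw [if_pos hsq]
      set j := Nat.sqrt n with hj
      have hj1 : 1 ≤ j := by
        rcases Nat.eq_zero_or_pos j with hz | h1
        · rw [hz] at hsq; simp at hsq; omega
        · exact h1
      have hjn : j ≤ n := by nlinarith
      have hjN : j ≤ N := le_trans hjn hn
      have hsub : ({N - j, N + j} : Finset ℕ) ⊆ range (2*N+1) := by
        intro x hx
        rcases Finset.mem_insert.mp hx with rfl | hx
        · exact Finset.mem_range.mpr (by omega)
        · rw [Finset.mem_singleton.mp hx]
          exact Finset.mem_range.mpr (by omega)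
      have hvan : ∀ x ∈ range (2*N+1), x ∉ ({N - j, N + j} : Finset ℕ) →
          (-1:ℤ)^(N+x) * (if n = ee N x then 1 else 0) = 0 := by
        intro x _ hx
        have : n ≠ ee N x := by
          intro hcon
          unfold ee at hcon
          set a := ((x:ℤ) - N).natAbs with ha
          have hsa : Nat.sqrt n = a := by rw [hcon]; exact Nat.sqrt_eq' a
          have haj : a = j := by omega
          apply hx
          simp only [Finset.mem_insert, Finset.mem_singleton]
          omega
        rw [if_neg this, mul_zero]
      rw [← Finset.sum_subset hsub hvan, Finset.sum_pair (by omega : N - j ≠ N + j)]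
      have e1 : ee N (N - j : ℕ) = n := by
        unfold ee
        rw [show (((N - j : ℕ) : ℤ) - N).natAbs = j by omega]
        exact hsq
      have e2 : ee N (N + j : ℕ) = n := by
        unfold ee
        rw [show (((N + j : ℕ) : ℤ) - N).natAbs = j by omega]
        exact hsq
      rw [e1, e2, if_pos rfl, mul_one, mul_one,
        neg_one_pow_mod (N + (N - j)) j (by omega),
        neg_one_pow_mod (N + (N + j)) j (by omega)]
      ring
    · rw [if_neg hsq]
      refine Finset.sum_eq_zero fun s _ => ?_
      have : n ≠ ee N s := by
        intro hcon
        unfold ee at hcon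
        set a := ((s:ℤ) - N).natAbs
        have : Nat.sqrt n = a := by
          rw [hcon]
          exact Nat.sqrt_eq' a
        apply hsq
        rw [this, ← hcon]
      rw [if_neg this, mul_zero]

/-! ### Matching the two partial products modulo `X^{n+1}` -/

lemma claimA (n N : ℕ) (hn : n ≤ N) :
    (X^(n+1) : Polynomial ℤ) ∣ (∏ k ∈ Finset.Icc 1 N, (1 - X ^ k))
      - ∏ j ∈ Finset.Ioc 0 n, (1 - X ^ j) := by
  have h := prod_trunc (Finset.Icc 1 N) (fun k => k) n
  have hset : (Finset.Icc 1 N).filter (fun k => k ≤ n) = Finset.Ioc 0 n := by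
    ext x
    simp only [Finset.mem_filter, Finset.mem_Icc, Finset.mem_Ioc]
    omega
  rwa [hset] at h

lemma claimB (n N : ℕ) (hn : n ≤ N) :
    (X^(n+1) : Polynomial ℤ) ∣ (∏ k ∈ Finset.Icc 1 N, (1 - X ^ (2*k-1)))
      - ∏ j ∈ (Finset.Ioc 0 n).filter (fun j => j % 2 = 1), (1 - X ^ j) := by
  have h := prod_trunc (Finset.Icc 1 N) (fun k => 2*k-1) n
  have hre : (∏ k ∈ (Finset.Icc 1 N).filter (fun k => 2*k-1 ≤ n), (1 - (X:Polynomial ℤ) ^ (2*k-1)))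
      = ∏ j ∈ (Finset.Ioc 0 n).filter (fun j => j % 2 = 1), (1 - X ^ j) := by
    refine Finset.prod_nbij' (fun k => 2*k-1) (fun j => (j+1)/2) ?_ ?_ ?_ ?_ ?_
    · intro a ha
      simp only [Finset.mem_filter, Finset.mem_Icc, Finset.mem_Ioc] at ha ⊢
      omega
    · intro a ha
      simp only [Finset.mem_filter, Finset.mem_Icc, Finset.mem_Ioc] at ha ⊢
      omega
    · intro a ha
      simp only [Finset.mem_filter, Finset.mem_Icc] at ha
      omega
    · intro a ha
      simp only [Finset.mem_filter, Finset.mem_Ioc] at ha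
      omega
    · intro a _; rfl
  rwa [hre] at h

lemma claimC (n N : ℕ) (hn : n ≤ N) :
    (X^(n+1) : Polynomial ℤ) ∣ (∏ k ∈ range N, (1 - X ^ (2*k+1)))
      - ∏ j ∈ (Finset.Ioc 0 n).filter (fun j => j % 2 = 1), (1 - X ^ j) := by
  have h := prod_trunc (range N) (fun k => 2*k+1) n
  have hre : (∏ k ∈ (range N).filter (fun k => 2*k+1 ≤ n), (1 - (X:Polynomial ℤ) ^ (2*k+1)))
      = ∏ j ∈ (Finset.Ioc 0 n).filter (fun j => j % 2 = 1), (1 - X ^ j) := by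
    refine Finset.prod_nbij' (fun k => 2*k+1) (fun j => j/2) ?_ ?_ ?_ ?_ ?_
    · intro a ha
      simp only [Finset.mem_filter, Finset.mem_range, Finset.mem_Ioc] at ha ⊢
      omega
    · intro a ha
      simp only [Finset.mem_filter, Finset.mem_range, Finset.mem_Ioc] at ha ⊢
      omega
    · intro a ha
      simp only [Finset.mem_filter, Finset.mem_range] at ha
      omega
    · intro a ha
      simp only [Finset.mem_filter, Finset.mem_Ioc] at ha
      omega
    · intro a _; rfl
  rwa [hre] at h

lemma claimD (n N : ℕ) (hn : n ≤ N) :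
    (X^(n+1) : Polynomial ℤ) ∣ Dq2 (2*N)
      - ∏ j ∈ (Finset.Ioc 0 n).filter (fun j => ¬ j % 2 = 1), (1 - X ^ j) := by
  have h := prod_trunc (Finset.Ioc 0 (2*N)) (fun k => 2*k) n
  have hre : (∏ k ∈ (Finset.Ioc 0 (2*N)).filter (fun k => 2*k ≤ n), (1 - (X:Polynomial ℤ) ^ (2*k)))
      = ∏ j ∈ (Finset.Ioc 0 n).filter (fun j => ¬ j % 2 = 1), (1 - X ^ j) := by
    refine Finset.prod_nbij' (fun k => 2*k) (fun j => j/2) ?_ ?_ ?_ ?_ ?_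
    · intro a ha
      simp only [Finset.mem_filter, Finset.mem_Ioc] at ha ⊢
      omega
    · intro a ha
      simp only [Finset.mem_filter, Finset.mem_Ioc] at ha ⊢
      omega
    · intro a ha
      simp only [Finset.mem_filter, Finset.mem_Ioc] at ha
      omega
    · intro a ha
      simp only [Finset.mem_filter, Finset.mem_Ioc] at ha
      omega
    · intro a _; rfl
  rw [Dq2]
  rwa [hre] at h

/-- The polynomial version of the main theorem. -/
lemma main_poly (n N : ℕ) (hn : n ≤ N) :
    (∏ k ∈ Finset.Icc 1 N, (1 - (X:Polynomial ℤ) ^ (2*k-1)) * (1 - X ^ k)).coeff n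
      = if n = 0 then 1 else if Nat.sqrt n ^ 2 = n then 2 * (-1:ℤ)^(Nat.sqrt n) else 0 := by
  set w := ∏ j ∈ Finset.Ioc 0 n, (1 - (X:Polynomial ℤ) ^ j) with hw
  set podd := ∏ j ∈ (Finset.Ioc 0 n).filter (fun j => j % 2 = 1), (1 - (X:Polynomial ℤ) ^ j) with hpodd
  set peven := ∏ j ∈ (Finset.Ioc 0 n).filter (fun j => ¬ j % 2 = 1), (1 - (X:Polynomial ℤ) ^ j) with hpeven
  have hwsplit : podd * peven = w :=
    Finset.prod_filter_mul_prod_filter_not (Finset.Ioc 0 n) (fun j => j % 2 = 1) _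
  have hT : (X^(n+1) : Polynomial ℤ) ∣
      (∏ k ∈ Finset.Icc 1 N, (1 - (X:Polynomial ℤ) ^ (2*k-1)) * (1 - X ^ k)) - podd * w := by
    rw [Finset.prod_mul_distrib]
    exact dvdMulSubMul _ _ _ _ _ (claimB n N hn) (claimA n N hn)
  have hF : (X^(n+1) : Polynomial ℤ) ∣
      ((∏ k ∈ range N, (1 - (X:Polynomial ℤ) ^ (2*k+1)))^2 * Dq2 (2*N)) - podd * w := by
    have h2 : (X^(n+1) : Polynomial ℤ) ∣
        (∏ k ∈ range N, (1 - (X:Polynomial ℤ) ^ (2*k+1)))^2 - podd * podd := by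
      rw [pow_two]
      exact dvdMulSubMul _ _ _ _ _ (claimC n N hn) (claimC n N hn)
    have h3 := dvdMulSubMul (X^(n+1)) _ (podd * podd) _ peven h2 (claimD n N hn)
    rwa [mul_assoc, hwsplit] at h3
  have hTF : (X^(n+1) : Polynomial ℤ) ∣
      (∏ k ∈ Finset.Icc 1 N, (1 - (X:Polynomial ℤ) ^ (2*k-1)) * (1 - X ^ k))
        - (∏ k ∈ range N, (1 - (X:Polynomial ℤ) ^ (2*k+1)))^2 * Dq2 (2*N) := by
    have := dvd_sub hT hF
    have heq : (∏ k ∈ Finset.Icc 1 N, (1 - (X:Polynomial ℤ) ^ (2*k-1)) * (1 - X ^ k)) - podd * w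
        - (((∏ k ∈ range N, (1 - (X:Polynomial ℤ) ^ (2*k+1)))^2 * Dq2 (2*N)) - podd * w)
        = (∏ k ∈ Finset.Icc 1 N, (1 - (X:Polynomial ℤ) ^ (2*k-1)) * (1 - X ^ k))
          - (∏ k ∈ range N, (1 - (X:Polynomial ℤ) ^ (2*k+1)))^2 * Dq2 (2*N) := by ring
    rwa [heq] at this
  rw [coeff_eq_of_dvd n _ _ hTF, Fcoeff N n hn, sum_theta N n hn]

/-- The theta series `∑_{n ∈ ℤ} (-1)^n z^(n²) = 1 + 2 ∑_{n ≥ 1} (-1)^n z^(n²)` as a formal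
power series over `ℤ`: its `m`-th coefficient is `1` for `m = 0`, `2·(-1)^n` if `m = n²` with
`n ≥ 1`, and `0` otherwise. -/
def thetaAlt : PowerSeries ℤ :=
  PowerSeries.mk fun m =>
    if m = 0 then 1 else if Nat.sqrt m ^ 2 = m then 2 * (-1 : ℤ) ^ Nat.sqrt m else 0

/-- `∑_{n ∈ ℤ} (-1)^n z^(n²) = ∏_{k ≥ 1} (1 - z^(2k-1)) (1 - z^k)` as formal power series in
`z`.  The identity is expressed coefficient-by-coefficient: since the `k`-th factor is
`1 + O(z^k)`, the `n`-th coefficient of the infinite product equals that of any partial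
product over `1 ≤ k ≤ N` with `N ≥ n`. -/
theorem thetaAlt_eq_prod_one_sub (n N : ℕ) (hnN : n ≤ N) :
    PowerSeries.coeff (R := ℤ) n thetaAlt =
      PowerSeries.coeff (R := ℤ) n
        (∏ k ∈ Finset.Icc 1 N,
          (1 - (PowerSeries.X : PowerSeries ℤ) ^ (2 * k - 1)) *
            (1 - (PowerSeries.X : PowerSeries ℤ) ^ k)) := by
  have hcoe : (∏ k ∈ Finset.Icc 1 N,
        (1 - (PowerSeries.X : PowerSeries ℤ) ^ (2 * k - 1)) *
          (1 - (PowerSeries.X : PowerSeries ℤ) ^ k))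
      = ((∏ k ∈ Finset.Icc 1 N,
          (1 - (X : Polynomial ℤ) ^ (2 * k - 1)) * (1 - X ^ k) : Polynomial ℤ) :
            PowerSeries ℤ) := by
    rw [← Polynomial.coeToPowerSeries.ringHom_apply, map_prod]
    refine Finset.prod_congr rfl fun k _ => ?_
    simp only [map_mul, map_sub, map_one, map_pow]
    rw [Polynomial.coeToPowerSeries.ringHom_apply, Polynomial.coe_X]
  rw [hcoe, Polynomial.coeff_coe, main_poly n N hnN, thetaAlt, PowerSeries.coeff_mk]
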